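/- If g₁ and g₂ are impulse responses whose Hankel matrices H_{g₁}(t,j) and H_{g₂}(t,j) are positive semidefinite for all t ≥ 1 and 1 ≤ j ≤ k, then the pointwise product g(t) = g₁(t)·g₂(t) also satisfies H_g(t,j) ⪰ 0 for all t ≥ 1 and 1 ≤ j ≤ k. -/

import Mathlib

/-- The `j × j` Hankel matrix `H_g(t,j)` with `(a,b)` entry `g(t+a+b)` (0-based). -/
def hankelMat (g : ℕ → ℝ) (t j : ℕ) : Matrix (Fin j) (Fin j) ℝ :=
  Matrix.of fun a b => g (t + a + b)

open Matrix in
/-- Schur product theorem for real matrices. -/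
lemma schur_product_posSemidef {n : ℕ} (A B : Matrix (Fin n) (Fin n) ℝ)
    (hA : A.PosSemidef) (hB : B.PosSemidef) :
    (Matrix.of fun a b => A a b * B a b).PosSemidef := by
  obtain ⟨r, v, hv⟩ := Matrix.posSemidef_iff_eq_sum_vecMulVec.mp hA
  obtain ⟨C, hC⟩ : ∃ C : Matrix (Fin r) (Fin n) ℝ, A = Cᴴ * C :=
    ⟨Matrix.of v, by
      ext a b
      simp [hv, Matrix.mul_apply, Matrix.sum_apply, Matrix.vecMulVec_apply]⟩
  have hAab : ∀ a b, A a b = ∑ m, C m a * C m b := by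
    intro a b
    rw [hC]
    simp [Matrix.mul_apply, Matrix.conjTranspose_apply, mul_comm]
  rw [Matrix.posSemidef_iff_dotProduct_mulVec]
  constructor
  · ext a b
    simp only [Matrix.conjTranspose_apply, Matrix.of_apply, star_trivial]
    rw [← hA.1.apply a b, ← hB.1.apply a b, star_trivial, star_trivial]
  · intro x
    have hL : (dotProduct (star x) ((Matrix.of fun a b => A a b * B a b) *ᵥ x))
        = ∑ a, ∑ b, ∑ m, (C m a * x a) * (B a b * (C m b * x b)) := by
      simp only [dotProduct, Matrix.mulVec, dotProduct, star_trivial, Matrix.of_apply]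
      refine Finset.sum_congr rfl fun a _ => ?_
      rw [Finset.mul_sum]
      refine Finset.sum_congr rfl fun b _ => ?_
      rw [hAab, Finset.sum_mul, Finset.sum_mul, Finset.mul_sum]
      exact Finset.sum_congr rfl fun m _ => by ring
    have hR : ∑ m, dotProduct (star fun a => C m a * x a) (B *ᵥ fun a => C m a * x a)
        = ∑ m, ∑ a, ∑ b, (C m a * x a) * (B a b * (C m b * x b)) := by
      refine Finset.sum_congr rfl fun m _ => ?_
      simp only [dotProduct, Matrix.mulVec, dotProduct, star_trivial]
      exact Finset.sum_congr rfl fun a _ => by rw [Finset.mul_sum]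
    have swap : ∑ a, ∑ b, ∑ m, (C m a * x a) * (B a b * (C m b * x b))
        = ∑ m, ∑ a, ∑ b, (C m a * x a) * (B a b * (C m b * x b)) :=
      (Finset.sum_congr rfl fun a _ => Finset.sum_comm).trans Finset.sum_comm
    rw [hL, swap, ← hR]
    exact Finset.sum_nonneg fun m _ => (Matrix.posSemidef_iff_dotProduct_mulVec.mp hB).2 _

theorem hankel_kpos_pointwise_mul (k : ℕ) (g₁ g₂ : ℕ → ℝ)
    (h₁ : ∀ t j, 1 ≤ t → 1 ≤ j → j ≤ k → (hankelMat g₁ t j).PosSemidef)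
    (h₂ : ∀ t j, 1 ≤ t → 1 ≤ j → j ≤ k → (hankelMat g₂ t j).PosSemidef) :
    ∀ t j, 1 ≤ t → 1 ≤ j → j ≤ k →
      (hankelMat (fun s => g₁ s * g₂ s) t j).PosSemidef := by
  intro t j ht hj hjk
  exact schur_product_posSemidef _ _ (h₁ t j ht hj hjk) (h₂ t j ht hj hjk)
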